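/- arXiv:0906.3666 — 4 statements merged into one kernel-verified Lean document; each statement's English description precedes it below -/
import Mathlib

section
/- Let a, b be distinct real zeros of a function Ai satisfying Ai''(w) = w·Ai(w) and Ai, Ai' → 0 at +∞ (with the relevant integrability). Then ∫₀^∞ Ai(u+a) Ai(u+b) du = 0, i.e., translates of the Airy function by distinct zeros are orthogonal in L²(0,∞). -/
open MeasureTheory Filter

theorem airy_translates_orthogonal (Ai Ai' : ℝ → ℝ)
    (hAi : ∀ w, HasDerivAt Ai (Ai' w) w)
    (hAi' : ∀ w, HasDerivAt Ai' (w * Ai w) w)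
    (hAi0 : Tendsto Ai atTop (nhds 0))
    (hAi'0 : Tendsto Ai' atTop (nhds 0))
    (a b : ℝ) (hab : a ≠ b) (ha : Ai a = 0) (hb : Ai b = 0)
    (hint : IntegrableOn (fun u => Ai (u + a) * Ai (u + b)) (Set.Ioi 0)) :
    ∫ u in Set.Ioi (0 : ℝ), Ai (u + a) * Ai (u + b) = 0 := by
  set F : ℝ → ℝ := fun u =>
    (Ai' (u + a) * Ai (u + b) - Ai (u + a) * Ai' (u + b)) / (a - b) with hF
  have hab' : a - b ≠ 0 := sub_ne_zero.mpr hab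
  have hderiv : ∀ u : ℝ, HasDerivAt F (Ai (u + a) * Ai (u + b)) u := by
    intro u
    have h1 : HasDerivAt (fun u : ℝ => Ai (u + a)) (Ai' (u + a)) u := by
      simpa [Function.comp_def] using (hAi (u + a)).comp u ((hasDerivAt_id u).add_const a)
    have h2 : HasDerivAt (fun u : ℝ => Ai (u + b)) (Ai' (u + b)) u := by
      simpa [Function.comp_def] using (hAi (u + b)).comp u ((hasDerivAt_id u).add_const b)
    have h3 : HasDerivAt (fun u : ℝ => Ai' (u + a)) ((u + a) * Ai (u + a)) u := by
      simpa [Function.comp_def] using (hAi' (u + a)).comp u ((hasDerivAt_id u).add_const a)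
    have h4 : HasDerivAt (fun u : ℝ => Ai' (u + b)) ((u + b) * Ai (u + b)) u := by
      simpa [Function.comp_def] using (hAi' (u + b)).comp u ((hasDerivAt_id u).add_const b)
    have h := (((h3.mul h2).sub (h1.mul h4)).div_const (a - b))
    convert h using 1
    all_goals try rfl
    field_simp
    ring
  have hF0 : F 0 = 0 := by simp [hF, ha, hb]
  have hlim : Tendsto F atTop (nhds 0) := by
    have hta : Tendsto (fun u : ℝ => u + a) atTop atTop := tendsto_atTop_add_const_right _ a tendsto_id
    have htb : Tendsto (fun u : ℝ => u + b) atTop atTop := tendsto_atTop_add_const_right _ b tendsto_id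
    have : Tendsto (fun u => Ai' (u + a) * Ai (u + b) - Ai (u + a) * Ai' (u + b))
        atTop (nhds (0 * 0 - 0 * 0)) :=
      ((hAi'0.comp hta).mul (hAi0.comp htb)).sub ((hAi0.comp hta).mul (hAi'0.comp htb))
    simpa [hF] using this.div_const (a - b)
  have := integral_Ioi_of_hasDerivAt_of_tendsto
    (f := F) (f' := fun u => Ai (u + a) * Ai (u + b)) (a := (0:ℝ)) (m := 0)
    (hderiv 0).continuousAt.continuousWithinAt (fun x _ => hderiv x) hint hlim
  simpa [hF0] using this
end

section
/- Under the same hypotheses, if a is a real zero of Ai, then ∫₀^∞ (Ai(u+a))² du = (Ai'(a))². -/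
open MeasureTheory Filter

theorem airy_translate_norm (Ai Ai' : ℝ → ℝ)
    (hAi : ∀ w, HasDerivAt Ai (Ai' w) w)
    (hAi' : ∀ w, HasDerivAt Ai' (w * Ai w) w)
    (hAi0 : Tendsto Ai atTop (nhds 0))
    (hAi'0 : Tendsto Ai' atTop (nhds 0))
    (a : ℝ) (ha : Ai a = 0)
    (hint : IntegrableOn (fun u => (Ai (u + a)) ^ 2) (Set.Ioi 0)) :
    ∫ u in Set.Ioi (0 : ℝ), (Ai (u + a)) ^ 2 = (Ai' a) ^ 2 := by
  set F : ℝ → ℝ := fun u => (u + a) * (Ai (u + a)) ^ 2 - (Ai' (u + a)) ^ 2 with hFdef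
  have hshift : ∀ u : ℝ, HasDerivAt (fun v : ℝ => v + a) 1 u := fun u =>
    (hasDerivAt_id u).add_const a
  have hF : ∀ u : ℝ, HasDerivAt F ((Ai (u + a)) ^ 2) u := by
    intro u
    have h1 : HasDerivAt (fun v => Ai (v + a)) (Ai' (u + a)) u := by
      simpa [Function.comp_def] using (hAi (u + a)).comp u (hshift u)
    have h2 : HasDerivAt (fun v => Ai' (v + a)) ((u + a) * Ai (u + a)) u := by
      simpa [Function.comp_def] using (hAi' (u + a)).comp u (hshift u)
    have : HasDerivAt F
        (1 * (Ai (u + a)) ^ 2 + (u + a) * (2 * Ai (u + a) ^ 1 * Ai' (u + a))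
          - 2 * Ai' (u + a) ^ 1 * ((u + a) * Ai (u + a))) u :=
      ((hshift u).mul (h1.pow 2)).sub (h2.pow 2)
    convert this using 1
    ring
  have hderivIoi : ∀ x ∈ Set.Ioi (0 : ℝ), HasDerivAt F ((Ai (x + a)) ^ 2) x :=
    fun x _ => hF x
  -- F tends to a limit L at +∞
  set L : ℝ := limUnder atTop F with hLdef
  have hFL : Tendsto F atTop (nhds L) :=
    tendsto_limUnder_of_hasDerivAt_of_integrableOn_Ioi hderivIoi hint
  -- Ai'(u+a) → 0
  have hshift_top : Tendsto (fun u : ℝ => u + a) atTop atTop :=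
    tendsto_atTop_add_const_right atTop a tendsto_id
  have hA'0 : Tendsto (fun u : ℝ => (Ai' (u + a)) ^ 2) atTop (nhds 0) := by
    simpa using (hAi'0.comp hshift_top).pow 2
  -- hence (u+a) Ai(u+a)^2 → L
  have hT : Tendsto (fun u : ℝ => (u + a) * (Ai (u + a)) ^ 2) atTop (nhds L) := by
    have : Tendsto (fun u : ℝ => F u + (Ai' (u + a)) ^ 2) atTop (nhds (L + 0)) :=
      hFL.add hA'0
    simpa [hFdef] using this
  -- L = 0, else Ai(u+a)^2 ≳ 1/u eventually, contradicting integrability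
  have hL0 : L = 0 := by
    have hLnonneg : 0 ≤ L := by
      refine le_of_tendsto_of_tendsto tendsto_const_nhds hT ?_
      filter_upwards [eventually_ge_atTop (-a)] with u hu
      have : (0:ℝ) ≤ u + a := by linarith
      positivity
    rcases hLnonneg.lt_or_eq with hL | hL
    · exfalso
      set c : ℝ := L / 2 / (1 + |a|) with hc
      have hcpos : 0 < c := by
        apply div_pos (by linarith)
        have := abs_nonneg a; linarith
      have hev : ∀ᶠ u in atTop, c * u⁻¹ ≤ (Ai (u + a)) ^ 2 := by
        have h1 : ∀ᶠ u in atTop, L / 2 < (u + a) * (Ai (u + a)) ^ 2 :=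
          hT.eventually (eventually_gt_nhds (by linarith))
        filter_upwards [h1, eventually_ge_atTop (max 1 (1 - a))] with u h1 h2
        have hu1 : (1:ℝ) ≤ u := le_trans (le_max_left _ _) h2
        have hupos : (0:ℝ) < u := by linarith
        have hpos : (0:ℝ) < u + a := by
          have := le_trans (le_max_right 1 (1 - a)) h2; linarith
        have hbound : u + a ≤ (1 + |a|) * u := by
          have h3 : a ≤ |a| := le_abs_self a
          nlinarith [abs_nonneg a]
        rw [hc, div_div]
        have habs : (0:ℝ) < 1 + |a| := by have := abs_nonneg a; linarith
        have hAsq : (0:ℝ) ≤ (Ai (u + a)) ^ 2 := sq_nonneg _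
        have key : L ≤ (Ai (u + a)) ^ 2 * u * (2 * (1 + |a|)) := by nlinarith
        calc L / (2 * (1 + |a|)) * u⁻¹ = L / (2 * (1 + |a|) * u) := by
              field_simp
        _ ≤ (Ai (u + a)) ^ 2 := by rw [div_le_iff₀ (by positivity)]; nlinarith
      rcases (eventually_atTop).1 hev with ⟨M, hM⟩
      set M' := max M 1 with hM'def
      have hI : IntegrableOn (fun u : ℝ => u⁻¹) (Set.Ioi M') := by
        have hint' : IntegrableOn (fun u => c⁻¹ * (Ai (u + a)) ^ 2) (Set.Ioi M') := by
          refine ((hint.mono_set ?_).const_mul _)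
          intro x hx
          exact Set.mem_Ioi.2 (lt_of_le_of_lt (by positivity : (0:ℝ) < 1).le
            (lt_of_le_of_lt (le_max_right M 1) hx))
        refine MeasureTheory.Integrable.mono hint' measurable_inv.aestronglyMeasurable ?_
        filter_upwards [ae_restrict_mem measurableSet_Ioi] with x hx
        have hx1 : (1:ℝ) < x := lt_of_le_of_lt (le_max_right M 1) hx
        have hxM : M ≤ x := le_of_lt (lt_of_le_of_lt (le_max_left M 1) hx)
        have h := hM x hxM
        have hxinv : (0:ℝ) ≤ x⁻¹ := by positivity
        rw [Real.norm_eq_abs, Real.norm_eq_abs, abs_of_nonneg hxinv]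
        have : x⁻¹ ≤ c⁻¹ * (Ai (x + a)) ^ 2 := by
          rw [inv_mul_eq_div, le_div_iff₀ hcpos]
          linarith [h, mul_comm c x⁻¹]
        exact this.trans (le_abs_self _)
      exact not_IntegrableOn_Ioi_inv hI
    · exact hL.symm
  -- conclude by FTC on (0,∞)
  have key := integral_Ioi_of_hasDerivAt_of_tendsto
    (f := F) (f' := fun u => (Ai (u + a)) ^ 2) (a := 0) (m := L)
    (hF 0).continuousAt.continuousWithinAt hderivIoi hint hFL
  rw [key, hL0, hFdef]
  simp [ha]
end

section
/- For a zero a of the Airy function (Ai(a) = 0) and any z ≠ a, one has (1/(z−a)) · Ai(z)/Ai'(a) = (1/(Ai'(a))²) · ∫₀^∞ Ai(u+z) Ai(u+a) du, provided Ai'(a) ≠ 0. -/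
open MeasureTheory Filter

theorem airy_kernel_resolvent (Ai Ai' : ℝ → ℝ)
    (hAi : ∀ w, HasDerivAt Ai (Ai' w) w)
    (hAi' : ∀ w, HasDerivAt Ai' (w * Ai w) w)
    (hAi0 : Tendsto Ai atTop (nhds 0))
    (hAi'0 : Tendsto Ai' atTop (nhds 0))
    (a : ℝ) (ha : Ai a = 0) (ha' : Ai' a ≠ 0)
    (z : ℝ) (hza : z ≠ a)
    (hint : IntegrableOn (fun u => Ai (u + z) * Ai (u + a)) (Set.Ioi 0)) :
    (1 / (z - a)) * (Ai z / Ai' a) =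
      (1 / (Ai' a) ^ 2) * ∫ u in Set.Ioi (0 : ℝ), Ai (u + z) * Ai (u + a) := by
  have hz : z - a ≠ 0 := sub_ne_zero.mpr hza
  set g : ℝ → ℝ := fun u => (Ai' (u + z) * Ai (u + a) - Ai (u + z) * Ai' (u + a)) / (z - a)
    with hgdef
  have hderiv : ∀ u : ℝ, HasDerivAt g (Ai (u + z) * Ai (u + a)) u := by
    intro u
    have h1 : HasDerivAt (fun u : ℝ => Ai (u + z)) (Ai' (u + z)) u := by
      simpa [Function.comp_def] using (hAi (u + z)).comp u ((hasDerivAt_id u).add_const z)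
    have h2 : HasDerivAt (fun u : ℝ => Ai (u + a)) (Ai' (u + a)) u := by
      simpa [Function.comp_def] using (hAi (u + a)).comp u ((hasDerivAt_id u).add_const a)
    have h3 : HasDerivAt (fun u : ℝ => Ai' (u + z)) ((u + z) * Ai (u + z)) u := by
      simpa [Function.comp_def] using (hAi' (u + z)).comp u ((hasDerivAt_id u).add_const z)
    have h4 : HasDerivAt (fun u : ℝ => Ai' (u + a)) ((u + a) * Ai (u + a)) u := by
      simpa [Function.comp_def] using (hAi' (u + a)).comp u ((hasDerivAt_id u).add_const a)
    have h := ((h3.mul h2).sub (h1.mul h4)).div_const (z - a)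
    convert h using 1
    all_goals first | rfl | skip
    field_simp
    ring
  have htend : Tendsto g atTop (nhds 0) := by
    have hz' : Tendsto (fun u : ℝ => u + z) atTop atTop :=
      tendsto_atTop_add_const_right _ z tendsto_id
    have ha2 : Tendsto (fun u : ℝ => u + a) atTop atTop :=
      tendsto_atTop_add_const_right _ a tendsto_id
    have h : Tendsto (fun u => Ai' (u + z) * Ai (u + a) - Ai (u + z) * Ai' (u + a))
        atTop (nhds 0) := by
      have := ((hAi'0.comp hz').mul (hAi0.comp ha2)).sub ((hAi0.comp hz').mul (hAi'0.comp ha2))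
      simpa [Function.comp] using this
    simpa using h.div_const (z - a)
  have hcont : ContinuousWithinAt g (Set.Ici 0) 0 :=
    (hderiv 0).continuousAt.continuousWithinAt
  have hkey := integral_Ioi_of_hasDerivAt_of_tendsto hcont (fun x _ => hderiv x) hint htend
  rw [hkey]
  have hg0 : g 0 = -(Ai z * Ai' a) / (z - a) := by
    simp [hgdef, ha]
  rw [hg0]
  field_simp
  ring
end

section
/- For real c ≠ 0 and ξ ∈ ℝ, ∫_ℝ (1/√π) e^{−x²} Ai((ξ+x)/c) dx = exp[ (1/(4c³))(ξ + 1/(24c³)) ] · Ai( ξ/c + 1/(16c⁴) ), where Ai is the standard Airy function. -/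
open MeasureTheory Real Filter

/-- The Airy function, defined through the improper oscillatory integral
`Ai(x) = (1/π) ∫₀^∞ cos(xk + k³/3) dk`, interpreted as a limit of proper integrals. -/
noncomputable def Ai (x : ℝ) : ℝ :=
  limUnder atTop (fun R : ℝ => (1 / Real.pi) * ∫ k in (0:ℝ)..R, Real.cos (x * k + k ^ 3 / 3))

noncomputable def f (x : ℝ) (z : ℂ) : ℂ := Complex.exp (Complex.I * (x * z + z ^ 3 / 3))

lemma f_entire (x : ℝ) : Differentiable ℂ (f x) := by
  unfold f; fun_prop

lemma arg_decomp (x t s : ℝ) :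
    Complex.I * ((x:ℂ) * (t + s*Complex.I) + (t + s*Complex.I) ^ 3 / 3)
    = Complex.ofReal (-(x*s) - t^2*s + s^3/3) + Complex.ofReal (x*t + t^3/3 - t*s^2) * Complex.I := by
  have h : (Complex.I:ℂ)^2 = -1 := Complex.I_sq
  push_cast
  ring_nf
  linear_combination (-(s*t^2) - s^2*t*Complex.I + s^3/3*(Complex.I^2-1)/1 - x*s + 2*x*s + 2*t^2*s + 2*Complex.I*t*s^2) * h

lemma norm_f (x t s : ℝ) : ‖f x (t + s*Complex.I)‖ = Real.exp (-(x*s) - t^2*s + s^3/3) := by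
  rw [f, arg_decomp]
  simp [Complex.norm_exp, ← Complex.ofReal_pow]

lemma f_cont (x : ℝ) {s : ℝ} : Continuous (fun t : ℝ => f x (t + s*Complex.I)) := by
  exact (f_entire x).continuous.comp (by fun_prop)

lemma f_integrable (x : ℝ) {s : ℝ} (hs : 0 < s) :
    Integrable (fun t : ℝ => f x (t + s*Complex.I)) := by
  apply Integrable.mono' (g := fun t : ℝ => Real.exp (-(x*s) + s^3/3) * Real.exp (-s * t^2))
  · exact (integrable_exp_neg_mul_sq hs).const_mul _
  · exact (f_cont x).aestronglyMeasurable
  · refine Filter.Eventually.of_forall fun t => ?_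
    rw [norm_f, ← Real.exp_add]
    apply Real.exp_le_exp.2
    nlinarith [sq_nonneg t, hs.le]

lemma f_real (x t : ℝ) : f x t = Complex.exp ((x*t + t^3/3 : ℝ) * Complex.I) := by
  rw [f]; push_cast; ring_nf

lemma partial_eq (x R : ℝ) :
    (∫ t in (-R)..R, f x t) = ((2 * ∫ k in (0:ℝ)..R, Real.cos (x*k + k^3/3) : ℝ) : ℂ) := by
  have hc : Continuous (fun t : ℝ => f x t) := (f_entire x).continuous.comp (by fun_prop)
  have h1 : ∫ t in (-R)..(0:ℝ), f x t = ∫ t in (0:ℝ)..R, f x (-(t:ℝ) : ℝ) := by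
    rw [intervalIntegral.integral_comp_neg (fun t : ℝ => f x t)]; simp
  have hnc : Continuous fun t : ℝ => f x ((-t : ℝ) : ℂ) := hc.comp continuous_neg
  have h2 : (∫ t in (-R)..R, f x t)
      = ∫ t in (0:ℝ)..R, (f x (-(t:ℝ) : ℝ) + f x t) := by
    rw [← intervalIntegral.integral_add_adjacent_intervals
      (a := -R) (b := (0:ℝ)) (c := R) (hc.intervalIntegrable _ _) (hc.intervalIntegrable _ _),
      h1]
    exact (intervalIntegral.integral_add (hnc.intervalIntegrable _ _)
      (hc.intervalIntegrable _ _)).symm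
  have key : ∀ t : ℝ, f x (-(t:ℝ) : ℝ) + f x t = ((2 * Real.cos (x*t + t^3/3) : ℝ) : ℂ) := by
    intro t
    rw [f_real, f_real]
    have : ((x*(-t) + (-t)^3/3 : ℝ) : ℂ) = -((x*t + t^3/3 : ℝ) : ℂ) := by push_cast; ring
    rw [this]
    push_cast
    rw [Complex.two_cos, add_comm, neg_mul]
  rw [h2]
  rw [intervalIntegral.integral_congr (g := fun t : ℝ => ((2 * Real.cos (x*t + t^3/3) : ℝ) : ℂ))
    (fun t _ => key t)]
  rw [intervalIntegral.integral_ofReal]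
  norm_cast
  rw [intervalIntegral.integral_const_mul]

lemma rect (x R : ℝ) {s : ℝ} (hs : 0 < s) :
    (∫ t in (-R)..R, f x t) = (∫ t in (-R)..R, f x (t + s*Complex.I))
      - Complex.I * (∫ y in (0:ℝ)..s, f x (R + y*Complex.I))
      + Complex.I * (∫ y in (0:ℝ)..s, f x ((-R : ℝ) + y*Complex.I)) := by
  have h := Complex.integral_boundary_rect_eq_zero_of_differentiableOn (f x)
      (Complex.ofReal (-R)) ((R:ℂ) + s*Complex.I) ((f_entire x).differentiableOn)
  simp only [Complex.add_re, Complex.add_im, Complex.ofReal_re, Complex.ofReal_im,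
    Complex.mul_re, Complex.mul_im, Complex.I_re, Complex.I_im, Complex.ofReal_zero,
    mul_zero, mul_one, zero_mul, sub_zero, zero_add, add_zero, zero_sub, smul_eq_mul] at h
  linear_combination h

lemma vert_tendsto (x : ℝ) {s : ℝ} (hs : 0 < s) (u : ℝ → ℝ) (hu : ∀ R, (u R)^2 = R^2) :
    Tendsto (fun R : ℝ => ∫ y in (0:ℝ)..s, f x ((u R : ℝ) + y*Complex.I)) atTop (nhds 0) := by
  have key : ∀ R : ℝ, 1 ≤ R →
      ‖∫ y in (0:ℝ)..s, f x ((u R : ℝ) + y*Complex.I)‖ ≤ Real.exp (|x| * s + s^3/3) / R^2 := by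
    intro R hR
    have hR2 : (0:ℝ) < R^2 := by positivity
    have hcv : Continuous (fun y : ℝ => f x ((u R : ℝ) + y*Complex.I)) :=
      (f_entire x).continuous.comp (by fun_prop)
    have hexp : ∫ y in (0:ℝ)..s, Real.exp (-(R^2) * y) = (1 - Real.exp (-(R^2)*s))/R^2 := by
      rw [intervalIntegral.integral_comp_mul_left (fun y => Real.exp y) (neg_ne_zero.2 hR2.ne'),
        integral_exp, smul_eq_mul, mul_zero]
      field_simp
      rw [Real.exp_zero]; ring
    calc ‖∫ y in (0:ℝ)..s, f x ((u R : ℝ) + y*Complex.I)‖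
        ≤ ∫ y in (0:ℝ)..s, ‖f x ((u R : ℝ) + y*Complex.I)‖ :=
          intervalIntegral.norm_integral_le_integral_norm hs.le
      _ ≤ ∫ y in (0:ℝ)..s, Real.exp (|x| * s + s^3/3) * Real.exp (-(R^2) * y) := by
          apply intervalIntegral.integral_mono_on hs.le
          · exact hcv.norm.intervalIntegrable _ _
          · exact Continuous.intervalIntegrable (by fun_prop) _ _
          · intro y hy
            rw [norm_f, ← Real.exp_add]
            apply Real.exp_le_exp.2
            have h1 : -(x*y) ≤ |x| * y := by nlinarith [neg_abs_le x, abs_nonneg x, hy.1]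
            have h3 : (u R)^2*y = R^2*y := by rw [hu]
            have h2 : y^3 ≤ s^3 := pow_le_pow_left₀ hy.1 hy.2 3
            have h4 : |x| * y ≤ |x| * s := mul_le_mul_of_nonneg_left hy.2 (abs_nonneg x)
            linarith
      _ = Real.exp (|x| * s + s^3/3) * ∫ y in (0:ℝ)..s, Real.exp (-(R^2) * y) := by
          rw [intervalIntegral.integral_const_mul]
      _ ≤ Real.exp (|x| * s + s^3/3) * (1/R^2) := by
          apply mul_le_mul_of_nonneg_left _ (Real.exp_nonneg _)
          rw [hexp]
          rw [show (1:ℝ)/R^2 = 1/R^2 from rfl]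
          gcongr
          linarith [Real.exp_nonneg (-(R^2)*s)]
      _ = Real.exp (|x| * s + s^3/3) / R^2 := by ring
  apply squeeze_zero_norm' (Filter.eventually_atTop.2 ⟨1, key⟩)
  exact Tendsto.div_atTop tendsto_const_nhds (tendsto_pow_atTop (by norm_num))

lemma tendsto_partial (x : ℝ) {s : ℝ} (hs : 0 < s) :
    Tendsto (fun R : ℝ => ∫ t in (-R)..R, f x t) atTop
      (nhds (∫ t : ℝ, f x (t + s*Complex.I))) := by
  have hH : Tendsto (fun R : ℝ => ∫ t in (-R)..R, f x ((t:ℝ) + s*Complex.I)) atTop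
      (nhds (∫ t : ℝ, f x (t + s*Complex.I))) :=
    intervalIntegral_tendsto_integral (f_integrable x hs) tendsto_neg_atTop_atBot tendsto_id
  have hVr := vert_tendsto x hs (fun R => R) (fun R => rfl)
  have hVl := vert_tendsto x hs (fun R => -R) (fun R => by ring)
  have := (hH.sub ((tendsto_const_nhds (x := Complex.I)).mul hVr)).add
    ((tendsto_const_nhds (x := Complex.I)).mul hVl)
  simp only [mul_zero, sub_zero, add_zero] at this
  apply this.congr
  intro R
  exact (rect x R hs).symm

lemma Ai_contour (x : ℝ) {s : ℝ} (hs : 0 < s) :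
    (∫ t : ℝ, f x (t + s*Complex.I)) = ((2 * Real.pi * Ai x : ℝ) : ℂ) := by
  set J := ∫ t : ℝ, f x (t + s*Complex.I) with hJ
  have h1 : Tendsto (fun R : ℝ => ((2 * ∫ k in (0:ℝ)..R, Real.cos (x*k + k^3/3) : ℝ) : ℂ))
      atTop (nhds J) := by
    apply (tendsto_partial x hs).congr
    intro R; exact partial_eq x R
  have hre : Tendsto (fun R : ℝ => 2 * ∫ k in (0:ℝ)..R, Real.cos (x*k + k^3/3)) atTop
      (nhds J.re) := (Complex.continuous_re.tendsto J).comp h1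
  have himz : J.im = 0 := by
    have h := (Complex.continuous_im.tendsto J).comp h1
    simp only [Function.comp_def, Complex.ofReal_im] at h
    exact tendsto_nhds_unique h tendsto_const_nhds
  have hAi : Ai x = (1/(2*Real.pi)) * J.re := by
    rw [Ai]
    apply Tendsto.limUnder_eq
    have h2 := hre.const_mul (1/(2*Real.pi))
    apply h2.congr
    intro R
    have hπ : Real.pi ≠ 0 := Real.pi_ne_zero
    field_simp
  rw [hAi]
  apply Complex.ext <;> simp [himz]
  field_simp

lemma sqrt_pi_cpow : ((Real.pi : ℂ) / 1) ^ ((1:ℂ)/2) = ((Real.sqrt Real.pi : ℝ) : ℂ) := by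
  rw [div_one, Real.sqrt_eq_rpow, Complex.ofReal_cpow Real.pi_pos.le]
  norm_num

lemma inner_gauss (c : ℝ) (hc : c ≠ 0) (ξ : ℝ) (z : ℂ) :
    (∫ x : ℝ, ((1/Real.sqrt Real.pi * Real.exp (-x^2) : ℝ) : ℂ) *
        Complex.exp (Complex.I * (((ξ+x)/c : ℝ) * z + z^3/3)))
    = Complex.exp (Complex.I * (((ξ/c : ℝ) : ℂ) * z + z^3/3) - z^2/(4*(c:ℂ)^2)) := by
  have hcc : (c:ℂ) ≠ 0 := Complex.ofReal_ne_zero.2 hc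
  have hsp : Real.sqrt Real.pi ≠ 0 := by positivity
  have step : ∀ x : ℝ, ((1/Real.sqrt Real.pi * Real.exp (-x^2) : ℝ) : ℂ) *
        Complex.exp (Complex.I * (((ξ+x)/c : ℝ) * z + z^3/3))
      = (((1/Real.sqrt Real.pi : ℝ) : ℂ) * Complex.exp (Complex.I * (((ξ/c : ℝ) : ℂ) * z + z^3/3)))
        * (Complex.exp (Complex.I * (z/c) * x) * Complex.exp (-1 * (x:ℂ)^2)) := by
    intro x
    rw [Complex.ofReal_mul, Complex.ofReal_exp, mul_assoc, ← Complex.exp_add,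
        mul_assoc, ← Complex.exp_add, ← Complex.exp_add]
    congr 2
    push_cast
    field_simp
    ring
  rw [MeasureTheory.integral_congr_ae (Filter.Eventually.of_forall step),
    MeasureTheory.integral_const_mul, fourierIntegral_gaussian (by norm_num) (z/(c:ℂ)),
    sqrt_pi_cpow]
  have h1 : ((1/Real.sqrt Real.pi : ℝ):ℂ) * ((Real.sqrt Real.pi : ℝ):ℂ) = 1 := by
    rw [← Complex.ofReal_mul, one_div, inv_mul_cancel₀ hsp, Complex.ofReal_one]
  have hmerge : Complex.exp (Complex.I * (((ξ/c : ℝ):ℂ) * z + z^3/3))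
        * Complex.exp (-(z/(c:ℂ))^2/(4*1))
      = Complex.exp (Complex.I * (((ξ/c : ℝ):ℂ) * z + z^3/3) - z^2/(4*(c:ℂ)^2)) := by
    rw [← Complex.exp_add]; congr 1; field_simp; ring
  linear_combination (Complex.exp (Complex.I * (((ξ/c : ℝ):ℂ) * z + z^3/3))
    * Complex.exp (-(z/(c:ℂ))^2/(4*1))) * h1 + hmerge

lemma cube (a s t : ℝ) :
    Complex.I * ((a:ℂ) * ((t:ℂ) + ((1:ℝ):ℂ)*Complex.I) + ((t:ℂ) + ((1:ℝ):ℂ)*Complex.I)^3/3)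
      - (s:ℂ) * ((t:ℂ) + ((1:ℝ):ℂ)*Complex.I)^2
    = Complex.I * (((a + s^2 : ℝ):ℂ) * ((t:ℂ) + ((1 + s : ℝ))*Complex.I)
        + ((t:ℂ) + ((1 + s : ℝ):ℂ)*Complex.I)^3/3)
      + (((a + s^2)*s - s^3/3 : ℝ) : ℂ) := by
  have h2 : Complex.I^2 = -1 := Complex.I_sq
  have h3 : Complex.I^3 = -Complex.I := by rw [pow_succ, h2]; ring
  have h4 : Complex.I^4 = 1 := by rw [pow_succ, h3]; simp [Complex.I_mul_I]
  push_cast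
  ring_nf
  simp only [h2, h3, h4]
  ring

noncomputable def Fa (ξ c : ℝ) (x t : ℝ) : ℂ :=
  ((1/Real.sqrt Real.pi * Real.exp (-x^2) : ℝ) : ℂ) *
    f ((ξ+x)/c) ((t:ℂ) + ((1:ℝ):ℂ)*Complex.I)

theorem airy_transform_gaussian (c : ℝ) (hc : c ≠ 0) (ξ : ℝ) :
    ∫ x : ℝ, (1 / Real.sqrt Real.pi) * Real.exp (-x ^ 2) * Ai ((ξ + x) / c) =
      Real.exp ((1 / (4 * c ^ 3)) * (ξ + 1 / (24 * c ^ 3))) *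
        Ai (ξ / c + 1 / (16 * c ^ 4)) := by
  have hc2 : (0:ℝ) < c^2 := by positivity
  have hπ : (0:ℝ) < Real.pi := Real.pi_pos
  set s : ℝ := 1/(4*c^2) with hsdef
  have hs : (0:ℝ) < s := by positivity
  have hσ : (0:ℝ) < 1 + s := by positivity
  have hF : ∀ x t : ℝ, Fa ξ c x t = ((1/Real.sqrt Real.pi * Real.exp (-x^2) : ℝ) : ℂ) *
      f ((ξ+x)/c) ((t:ℂ) + ((1:ℝ):ℂ)*Complex.I) := fun _ _ => rfl
  -- continuity
  have hcont : Continuous (Function.uncurry (Fa ξ c)) := by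
    unfold Function.uncurry Fa f
    fun_prop
  -- norm
  have hnorm : ∀ x t : ℝ, ‖Fa ξ c x t‖ =
      (1/Real.sqrt Real.pi * Real.exp (-x^2) * Real.exp (-((ξ+x)/c) + 1/3)) * Real.exp (-t^2) := by
    intro x t
    rw [hF]
    rw [norm_mul, Complex.norm_real, norm_f, Real.norm_of_nonneg (by positivity)]
    rw [show (-(((ξ+x)/c)*1) - t^2*1 + 1^3/3 : ℝ) = (-((ξ+x)/c) + 1/3) + (-t^2) by ring,
      Real.exp_add]
    ring
  -- integrability of the x-factor
  have hφ : Integrable (fun x : ℝ => 1/Real.sqrt Real.pi * Real.exp (-x^2) * Real.exp (-((ξ+x)/c) + 1/3)) := by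
    have h0 : Integrable (fun x : ℝ => Complex.exp (-1*(x:ℂ)^2 + ((-1/c : ℝ):ℂ)*x + ((-ξ/c + 1/3 - Real.log (Real.sqrt Real.pi) : ℝ):ℂ))) :=
      integrable_cexp_quadratic (by norm_num) _ _
    apply h0.norm.congr
    refine Filter.Eventually.of_forall fun x => ?_
    dsimp only
    rw [Complex.norm_exp]
    rw [show (-1*(x:ℂ)^2 + ((-1/c : ℝ):ℂ)*x + ((-ξ/c + 1/3 - Real.log (Real.sqrt Real.pi) : ℝ):ℂ))
        = ((-x^2 + (-1/c)*x + (-ξ/c + 1/3 - Real.log (Real.sqrt Real.pi)) : ℝ) : ℂ) by push_cast; ring]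
    rw [Complex.ofReal_re]
    rw [show (-x^2 + (-1/c)*x + (-ξ/c + 1/3 - Real.log (Real.sqrt Real.pi)) : ℝ)
        = (-x^2) + (-((ξ+x)/c) + 1/3) + (- Real.log (Real.sqrt Real.pi)) by field_simp; ring]
    rw [Real.exp_add, Real.exp_add]
    rw [show Real.exp (-Real.log (Real.sqrt Real.pi)) = 1/Real.sqrt Real.pi by
      rw [Real.exp_neg, Real.exp_log (Real.sqrt_pos.mpr Real.pi_pos)]; ring]
    ring
  have hψ : Integrable (fun t : ℝ => Real.exp (-t^2)) := by
    simpa using integrable_exp_neg_mul_sq (by norm_num : (0:ℝ) < 1)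
  have hint : Integrable (Function.uncurry (Fa ξ c)) ((volume : Measure ℝ).prod volume) := by
    apply Integrable.mono' (Integrable.mul_prod hφ hψ) hcont.aestronglyMeasurable
    exact Filter.Eventually.of_forall fun p => le_of_eq (hnorm p.1 p.2)
  -- pointwise identity
  have point : ∀ x : ℝ, 1/Real.sqrt Real.pi * Real.exp (-x^2) * Ai ((ξ+x)/c)
      = (1/(2*Real.pi)) * (∫ t : ℝ, Fa ξ c x t).re := by
    intro x
    have h1 : ∫ t : ℝ, Fa ξ c x t
        = (((1/Real.sqrt Real.pi * Real.exp (-x^2)) * (2*Real.pi*Ai ((ξ+x)/c)) : ℝ) : ℂ) := by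
      simp only [hF]
      rw [MeasureTheory.integral_const_mul, Ai_contour _ one_pos, ← Complex.ofReal_mul]
    rw [h1, Complex.ofReal_re]
    field_simp
  rw [show (fun x : ℝ => 1 / Real.sqrt Real.pi * Real.exp (-x ^ 2) * Ai ((ξ + x) / c))
      = fun x : ℝ => (1/(2*Real.pi)) * (∫ t : ℝ, Fa ξ c x t).re from funext point]
  rw [MeasureTheory.integral_const_mul]
  have hswap : ∫ x : ℝ, (∫ t : ℝ, Fa ξ c x t).re = (∫ t : ℝ, ∫ x : ℝ, Fa ξ c x t).re := by
    rw [← MeasureTheory.integral_integral_swap hint]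
    exact integral_re hint.integral_prod_left
  rw [hswap]
  -- inner integral
  have hinner : ∀ t : ℝ, (∫ x : ℝ, Fa ξ c x t)
      = ((Real.exp ((ξ/c + s^2)*s - s^3/3) : ℝ) : ℂ)
        * f (ξ/c + s^2) ((t:ℂ) + ((1 + s : ℝ):ℂ)*Complex.I) := by
    intro t
    simp only [hF]
    have := inner_gauss c hc ξ ((t:ℂ) + ((1:ℝ):ℂ)*Complex.I)
    rw [show (fun x : ℝ => ((1/Real.sqrt Real.pi * Real.exp (-x^2) : ℝ) : ℂ) *
        f ((ξ+x)/c) ((t:ℂ) + ((1:ℝ):ℂ)*Complex.I)) = fun x : ℝ =>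
        ((1/Real.sqrt Real.pi * Real.exp (-x^2) : ℝ) : ℂ) *
        Complex.exp (Complex.I * ((((ξ+x)/c : ℝ):ℂ) * ((t:ℂ) + ((1:ℝ):ℂ)*Complex.I)
          + ((t:ℂ) + ((1:ℝ):ℂ)*Complex.I)^3/3)) from rfl]
    rw [this]
    rw [show Complex.I * (((ξ/c : ℝ):ℂ) * ((t:ℂ) + ((1:ℝ):ℂ)*Complex.I)
          + ((t:ℂ) + ((1:ℝ):ℂ)*Complex.I)^3/3)
        - ((t:ℂ) + ((1:ℝ):ℂ)*Complex.I)^2/(4*(c:ℂ)^2)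
        = Complex.I * (((ξ/c : ℝ):ℂ) * ((t:ℂ) + ((1:ℝ):ℂ)*Complex.I)
          + ((t:ℂ) + ((1:ℝ):ℂ)*Complex.I)^3/3)
        - ((s:ℝ):ℂ) * ((t:ℂ) + ((1:ℝ):ℂ)*Complex.I)^2 by
      rw [hsdef]; push_cast; field_simp]
    rw [cube (ξ/c) s t, Complex.exp_add, mul_comm, Complex.ofReal_exp]
    rfl
  rw [show (fun t : ℝ => ∫ x : ℝ, Fa ξ c x t) = fun t : ℝ =>
      ((Real.exp ((ξ/c + s^2)*s - s^3/3) : ℝ) : ℂ)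
        * f (ξ/c + s^2) ((t:ℂ) + ((1 + s : ℝ):ℂ)*Complex.I) from funext hinner]
  rw [MeasureTheory.integral_const_mul, Ai_contour _ hσ, ← Complex.ofReal_mul, Complex.ofReal_re]
  have hx' : ξ/c + s^2 = ξ/c + 1/(16*c^4) := by rw [hsdef]; field_simp; ring
  have hA : (ξ/c + s^2)*s - s^3/3 = (1/(4*c^3))*(ξ + 1/(24*c^3)) := by
    rw [hsdef]; field_simp; ring
  rw [hA, hx']
  field_simp
end
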